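/- For real vectors ṽ = (v₀, v₁) and w̃ = (w₀, w₁) where each v_x = (α_x, √(1−α_x²)) and w_y = (β_y, √(1−β_y²)) are unit vectors in ℝ², and matrix M̃ built from 2×2 blocks M_{xy} = diag((−1)^{xy}, η), the operator norm of M̃ equals max{√2, 2η}; consequently ṽᵗ M̃ w̃ ≤ 2·max{√2, 2η}. -/

import Mathlib

open Finset

set_option maxHeartbeats 1600000 in
/-- for the 4×4 block matrix `M̃` with blocks `M_{xy} = diag((−1)^{xy}, η)`
and the unit-block vectors `ṽ`, `w̃` built from `(α_x, √(1−α_x²))` and `(β_y, √(1−β_y²))`,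
the operator norm of `M̃` equals `max {√2, 2η}`, and hence `ṽᵗ M̃ w̃ ≤ 2·max {√2, 2η}`.
Indices: a pair `(x, i) : Bool × Bool` denotes block `x` and coordinate `i`
(`i = false` is the first coordinate of the block). -/
theorem block_matrix_opNorm (al be : Bool → ℝ) (η : ℝ) (hη : 0 ≤ η)
    (hal : ∀ x, |al x| ≤ 1) (hbe : ∀ y, |be y| ≤ 1) :
    let M : Matrix (Bool × Bool) (Bool × Bool) ℝ := fun r c =>
      if r.2 = c.2 then
        (if r.2 = false then (if r.1 && c.1 then (-1 : ℝ) else 1) else η)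
      else 0
    let v : EuclideanSpace ℝ (Bool × Bool) := WithLp.toLp 2 (fun r =>
      if r.2 = false then al r.1 else Real.sqrt (1 - (al r.1) ^ 2))
    let w : EuclideanSpace ℝ (Bool × Bool) := WithLp.toLp 2 (fun r =>
      if r.2 = false then be r.1 else Real.sqrt (1 - (be r.1) ^ 2))
    ‖LinearMap.toContinuousLinearMap (Matrix.toEuclideanLin M)‖
        = max (Real.sqrt 2) (2 * η) ∧
      (∑ i, ∑ j, v i * M i j * w j) ≤ 2 * max (Real.sqrt 2) (2 * η) := by
  intro M v w
  set T := LinearMap.toContinuousLinearMap (Matrix.toEuclideanLin M) with hT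
  set N := max (Real.sqrt 2) (2 * η) with hNdef
  have hs2 : Real.sqrt 2 ^ 2 = 2 := Real.sq_sqrt (by norm_num)
  have hs2nn : (0:ℝ) ≤ Real.sqrt 2 := Real.sqrt_nonneg 2
  have hN2 : Real.sqrt 2 ≤ N := le_max_left _ _
  have hNη : 2 * η ≤ N := le_max_right _ _
  have hN0 : 0 ≤ N := le_trans hs2nn hN2
  have hNsq2 : 2 ≤ N ^ 2 := by nlinarith
  have hNsqη : 4 * η ^ 2 ≤ N ^ 2 := by nlinarith
  -- explicit norm formula on this Euclidean space
  have hnorm : ∀ x : EuclideanSpace ℝ (Bool × Bool),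
      ‖x‖ = Real.sqrt (x (false,false)^2 + x (false,true)^2 + x (true,false)^2
        + x (true,true)^2) := by
    intro x
    rw [EuclideanSpace.norm_eq]
    simp only [Fintype.sum_prod_type, Fintype.sum_bool, Real.norm_eq_abs, sq_abs]
    ring_nf
  have hTapp : ∀ (u : EuclideanSpace ℝ (Bool × Bool)) i, T u i = ∑ j, M i j * u j :=
    fun u i => rfl
  -- T u componentwise
  have hTc : ∀ (u : EuclideanSpace ℝ (Bool × Bool)),
      T u (false,false) = u (false,false) + u (true,false)
      ∧ T u (true,false) = u (false,false) - u (true,false)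
      ∧ T u (false,true) = η * (u (false,true) + u (true,true))
      ∧ T u (true,true) = η * (u (false,true) + u (true,true)) := by
    intro u
    refine ⟨?_, ?_, ?_, ?_⟩ <;>
      · rw [hTapp]
        simp only [Fintype.sum_prod_type, Fintype.sum_bool, M]
        norm_num
        ring
  -- upper bound on operator norm
  have key : ∀ u : EuclideanSpace ℝ (Bool × Bool), ‖T u‖ ≤ N * ‖u‖ := by
    intro u
    obtain ⟨h1, h2, h3, h4⟩ := hTc u
    rw [hnorm, hnorm, h1, h2, h3, h4]
    set a := u (false,false); set b := u (true,false)
    set c := u (false,true); set d := u (true,true)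
    have : N * Real.sqrt (a^2 + c^2 + b^2 + d^2)
        = Real.sqrt (N^2 * (a^2 + c^2 + b^2 + d^2)) := by
      rw [Real.sqrt_mul (sq_nonneg N), Real.sqrt_sq hN0]
    rw [this]
    apply Real.sqrt_le_sqrt
    nlinarith [sq_nonneg (c - d), sq_nonneg a, sq_nonneg b, sq_nonneg c, sq_nonneg d,
      sq_nonneg (c + d)]
  have hup : ‖T‖ ≤ N := ContinuousLinearMap.opNorm_le_bound T hN0 key
  -- lower bound 1 : vector e_{(false,false)}
  have hlow1 : Real.sqrt 2 ≤ ‖T‖ := by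
    set u : EuclideanSpace ℝ (Bool × Bool) :=
      (WithLp.equiv 2 _).symm (fun r => if r = (false,false) then (1:ℝ) else 0) with hu
    have hui : ∀ r, u r = if r = (false,false) then (1:ℝ) else 0 := fun r => rfl
    have hun : ‖u‖ = 1 := by
      rw [hnorm]
      simp [hui]
    obtain ⟨h1, h2, h3, h4⟩ := hTc u
    have hTu : ‖T u‖ = Real.sqrt 2 := by
      rw [hnorm, h1, h2, h3, h4]
      simp [hui]
      norm_num
    have := T.le_opNorm u
    rw [hTu, hun, mul_one] at this
    exact this
  -- lower bound 2 : vector with 1s in second coordinates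
  have hlow2 : 2 * η ≤ ‖T‖ := by
    set u : EuclideanSpace ℝ (Bool × Bool) :=
      (WithLp.equiv 2 _).symm (fun r => if r.2 = true then (1:ℝ) else 0) with hu
    have hui : ∀ r, u r = if r.2 = true then (1:ℝ) else 0 := fun r => rfl
    have hun : ‖u‖ = Real.sqrt 2 := by
      rw [hnorm]
      simp [hui]
      norm_num
    obtain ⟨h1, h2, h3, h4⟩ := hTc u
    have hTu : ‖T u‖ = 2 * η * Real.sqrt 2 := by
      rw [hnorm, h1, h2, h3, h4]
      simp only [hui]
      norm_num
      rw [show (η*2)^2 + (η*2)^2 = (2*η*Real.sqrt 2)^2 by nlinarith]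
      exact Real.sqrt_sq (by positivity)
    have := T.le_opNorm u
    rw [hTu, hun] at this
    have hs2pos : (0:ℝ) < Real.sqrt 2 := Real.sqrt_pos.mpr (by norm_num)
    exact le_of_mul_le_mul_right (by linarith [this]) hs2pos
  have hop : ‖T‖ = N := le_antisymm hup (max_le hlow1 hlow2)
  refine ⟨hop, ?_⟩
  -- second part: the bilinear form bound
  have hvnorm : ‖v‖ = Real.sqrt 2 := by
    have h0 : (0:ℝ) ≤ 1 - al false ^ 2 := by nlinarith [abs_le.mp (hal false)]
    have h1 : (0:ℝ) ≤ 1 - al true ^ 2 := by nlinarith [abs_le.mp (hal true)]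
    rw [hnorm]
    simp only [v]
    norm_num [Real.sq_sqrt h0, Real.sq_sqrt h1]
  have hwnorm : ‖w‖ = Real.sqrt 2 := by
    have h0 : (0:ℝ) ≤ 1 - be false ^ 2 := by nlinarith [abs_le.mp (hbe false)]
    have h1 : (0:ℝ) ≤ 1 - be true ^ 2 := by nlinarith [abs_le.mp (hbe true)]
    rw [hnorm]
    simp only [w]
    norm_num [Real.sq_sqrt h0, Real.sq_sqrt h1]
  have hinner : (∑ i, ∑ j, v i * M i j * w j) = @inner ℝ _ _ v (T w) := by
    simp only [PiLp.inner_apply, RCLike.inner_apply, conj_trivial, hTapp, Finset.mul_sum, Finset.sum_mul]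
    exact Finset.sum_congr rfl fun i _ => Finset.sum_congr rfl fun j _ => by ring
  rw [hinner]
  calc @inner ℝ _ _ v (T w) ≤ ‖v‖ * ‖T w‖ := real_inner_le_norm v (T w)
    _ ≤ ‖v‖ * (N * ‖w‖) := by
        apply mul_le_mul_of_nonneg_left (key w) (norm_nonneg v)
    _ = 2 * N := by rw [hvnorm, hwnorm]; nlinarith
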